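/- Let H be a complex Hilbert space, B, C ∈ B(H), β ≥ 0, and let r ≥ 1 be a real number. Set γ₁ = (2β+1)/(β+1) and γ₂ = (2β+3)/(β+1). Let 𝕋 be the operator on H ⊕ H given by 𝕋(x, y) = (B y, C x). Then ω(𝕋)^{4r} ≤ (γ₁/16)·max{ ‖ |C|^{2r} + |B*|^{2r} ‖², ‖ |B|^{2r} + |C*|^{2r} ‖² } + (γ₂/8)·max{ ‖ |C|^{2r} + |B*|^{2r} ‖, ‖ |B|^{2r} + |C*|^{2r} ‖ }·max{ ω(BC)^r, ω(CB)^r }, where |A|^{2r} denotes the real power of the positive operator |A| defined via the continuous functional calculus. -/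

import Mathlib

open ContinuousLinearMap in
/-- The numerical radius `ω(A) = sup { |⟨A x, x⟩| : ‖x‖ = 1 }` of a bounded operator. -/
noncomputable def numRad {H : Type*} [NormedAddCommGroup H] [InnerProductSpace ℂ H]
    (A : H →L[ℂ] H) : ℝ :=
  sSup {t : ℝ | ∃ x : H, ‖x‖ = 1 ∧ t = ‖(inner ℂ (A x) x : ℂ)‖}

/-- The absolute value `|A| = (A*A)^{1/2}` of a bounded operator, via the continuous
functional calculus. -/
noncomputable def absOp {E F : Type*} [NormedAddCommGroup E] [InnerProductSpace ℂ E]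
    [CompleteSpace E] [NormedAddCommGroup F] [InnerProductSpace ℂ F] [CompleteSpace F]
    (A : E →L[ℂ] F) : E →L[ℂ] E :=
  cfc Real.sqrt ((ContinuousLinearMap.adjoint A).comp A)

open ContinuousLinearMap

open RCLike


section helpers
variable {H : Type*} [NormedAddCommGroup H] [InnerProductSpace ℂ H]

lemma numRad_le {A : H →L[ℂ] H} {c : ℝ} (hc : 0 ≤ c)
    (h : ∀ x : H, ‖x‖ = 1 → ‖(inner ℂ (A x) x : ℂ)‖ ≤ c) : numRad A ≤ c :=
  Real.sSup_le (by rintro t ⟨x, hx, rfl⟩; exact h x hx) hc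

lemma numRad_nonneg (A : H →L[ℂ] H) : 0 ≤ numRad A :=
  Real.sSup_nonneg (by rintro t ⟨x, hx, rfl⟩; positivity)

lemma le_numRad {A : H →L[ℂ] H} {x : H} (hx : ‖x‖ = 1) :
    ‖(inner ℂ (A x) x : ℂ)‖ ≤ numRad A := by
  apply le_csSup
  · refine ⟨‖A‖, ?_⟩
    rintro t ⟨y, hy, rfl⟩
    calc ‖(inner ℂ (A y) y : ℂ)‖ ≤ ‖A y‖ * ‖y‖ := norm_inner_le_norm _ _
      _ ≤ ‖A‖ * ‖y‖ * ‖y‖ := by gcongr; exact A.le_opNorm y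
      _ = ‖A‖ := by rw [hy]; ring
  · exact ⟨x, hx, rfl⟩

lemma inner_smul_smul (A : H →L[ℂ] H) (c : ℝ) (u : H) :
    (inner ℂ (A ((c:ℂ) • u)) ((c:ℂ) • u) : ℂ) = (c:ℂ)^2 * inner ℂ (A u) u := by
  rw [map_smul, inner_smul_left, inner_smul_right]
  simp [RCLike.conj_ofReal]
  ring

lemma norm_inner_le_numRad (A : H →L[ℂ] H) (x : H) :
    ‖(inner ℂ (A x) x : ℂ)‖ ≤ numRad A * ‖x‖ ^ 2 := by
  rcases eq_or_ne x 0 with rfl | hx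
  · simp
  · have hn : ‖x‖ ≠ 0 := norm_ne_zero_iff.2 hx
    set u : H := ((‖x‖ : ℂ))⁻¹ • x with hu
    have hu1 : ‖u‖ = 1 := norm_smul_inv_norm hx
    have hxu : x = ((‖x‖ : ℂ)) • u := by
      rw [hu, smul_smul, mul_inv_cancel₀ (by exact_mod_cast hn), one_smul]
    calc ‖(inner ℂ (A x) x : ℂ)‖ = ‖((‖x‖:ℂ))^2 * inner ℂ (A u) u‖ := by
          conv_lhs => rw [hxu, inner_smul_smul]
      _ = ‖x‖^2 * ‖(inner ℂ (A u) u : ℂ)‖ := by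
          rw [norm_mul]; norm_num
      _ ≤ ‖x‖^2 * numRad A := by gcongr; exact le_numRad hu1
      _ = numRad A * ‖x‖^2 := by ring

lemma buzano {a b e : H} (he : ‖e‖ = 1) :
    ‖(inner ℂ a e : ℂ)‖ * ‖(inner ℂ e b : ℂ)‖ ≤ (‖a‖ * ‖b‖ + ‖(inner ℂ a b : ℂ)‖) / 2 := by
  set c : ℂ := inner ℂ e a with hc
  set v : H := (2 * c) • e - a with hv
  have hnv : ‖v‖ = ‖a‖ := by
    have h2 : ‖v‖^2 = ‖a‖^2 := by
      rw [hv, @norm_sub_sq ℂ]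
      rw [inner_smul_left]
      have h3 : (starRingEnd ℂ) (2 * c) * inner ℂ e a
          = 2 * ((starRingEnd ℂ) (inner ℂ e a) * (inner ℂ e a)) := by
        rw [map_mul, hc]; simp [map_ofNat]; ring
      rw [hc] at h3
      rw [h3, RCLike.conj_mul, norm_smul, he]
      have h4 : ‖2 * c‖ = 2 * ‖c‖ := by rw [norm_mul]; norm_num
      rw [h4, hc]
      simp [← Complex.ofReal_pow]
      ring
    calc ‖v‖ = Real.sqrt (‖v‖^2) := (Real.sqrt_sq (norm_nonneg v)).symm
      _ = Real.sqrt (‖a‖^2) := by rw [h2]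
      _ = ‖a‖ := Real.sqrt_sq (norm_nonneg a)
  have hvb : (inner ℂ v b : ℂ) = 2 * (inner ℂ a e : ℂ) * (inner ℂ e b : ℂ) - inner ℂ a b := by
    rw [hv, inner_sub_left, inner_smul_left, map_mul, hc, inner_conj_symm]
    simp only [map_ofNat]
    try ring
  have h1 : 2 * (‖(inner ℂ a e : ℂ)‖ * ‖(inner ℂ e b : ℂ)‖)
      ≤ ‖(inner ℂ v b : ℂ)‖ + ‖(inner ℂ a b : ℂ)‖ := by
    calc 2 * (‖(inner ℂ a e : ℂ)‖ * ‖(inner ℂ e b : ℂ)‖)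
        = ‖(2 : ℂ) * (inner ℂ a e : ℂ) * (inner ℂ e b : ℂ)‖ := by
          rw [norm_mul, norm_mul]; norm_num; ring
      _ = ‖(inner ℂ v b : ℂ) + (inner ℂ a b : ℂ)‖ := by rw [hvb]; ring_nf
      _ ≤ _ := norm_add_le _ _
  have h2 : ‖(inner ℂ v b : ℂ)‖ ≤ ‖a‖ * ‖b‖ := by
    calc ‖(inner ℂ v b : ℂ)‖ ≤ ‖v‖ * ‖b‖ := norm_inner_le_norm _ _
      _ = ‖a‖ * ‖b‖ := by rw [hnv]
  linarith

end helpers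

section rpowHelpers

lemma convex_comb_rpow {r w₁ w₂ a b : ℝ} (hr : 1 ≤ r) (hw₁ : 0 ≤ w₁) (hw₂ : 0 ≤ w₂)
    (hw : w₁ + w₂ = 1) (ha : 0 ≤ a) (hb : 0 ≤ b) :
    (w₁ * a + w₂ * b) ^ r ≤ w₁ * a ^ r + w₂ * b ^ r := by
  have := (convexOn_rpow hr).2 (Set.mem_Ici.2 ha) (Set.mem_Ici.2 hb) hw₁ hw₂ hw
  simpa [smul_eq_mul] using this

lemma le_rpow_inv_of_rpow_le {p t c : ℝ} (hp : 0 < p) (ht : 0 ≤ t) (h : t ^ p ≤ c) :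
    t ≤ c ^ (1/p) := by
  have h2 := Real.rpow_le_rpow (Real.rpow_nonneg ht p) h (by positivity : (0:ℝ) ≤ 1/p)
  rwa [← Real.rpow_mul ht, mul_one_div, div_self hp.ne', Real.rpow_one] at h2

lemma rpow_le_of_le_rpow_inv {p t c : ℝ} (hp : 0 < p) (ht : 0 ≤ t) (hc : 0 ≤ c)
    (h : t ≤ c ^ (1/p)) : t ^ p ≤ c := by
  have h2 := Real.rpow_le_rpow ht h hp.le
  rwa [← Real.rpow_mul hc, one_div_mul_cancel hp.ne', Real.rpow_one] at h2

lemma tangent_line_rpow {p a t : ℝ} (hp : 1 ≤ p) (ha : 0 < a) (ht : 0 ≤ t) :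
    a ^ p + p * a ^ (p - 1) * (t - a) ≤ t ^ p := by
  have hs : -1 ≤ t / a - 1 := by
    have : 0 ≤ t / a := div_nonneg ht ha.le
    linarith
  have hb := one_add_mul_self_le_rpow_one_add hs hp
  rw [add_sub_cancel] at hb
  have hap : (0:ℝ) < a ^ p := Real.rpow_pos_of_pos ha p
  have hmul := mul_le_mul_of_nonneg_left hb hap.le
  have hdiv : (t / a) ^ p = t ^ p / a ^ p := Real.div_rpow ht ha.le p
  rw [hdiv] at hmul
  have h1 : a ^ p * (t ^ p / a ^ p) = t ^ p := by field_simp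
  rw [h1] at hmul
  have h2 : a ^ (p - 1) = a ^ p / a := Real.rpow_sub_one ha.ne' p
  calc a ^ p + p * a ^ (p - 1) * (t - a)
      = a ^ p * (1 + p * (t / a - 1)) := by
        rw [h2]; field_simp
    _ ≤ t ^ p := hmul

end rpowHelpers

section opHelpers
variable {H : Type*} [NormedAddCommGroup H] [InnerProductSpace ℂ H] [CompleteSpace H]

lemma inner_re_mono {S S' : H →L[ℂ] H} (h : S ≤ S') (x : H) :
    re (inner ℂ (S x) x : ℂ) ≤ re (inner ℂ (S' x) x : ℂ) := by
  have h1 := ((ContinuousLinearMap.le_def S S').mp h).re_inner_nonneg_left x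
  simp only [reApplyInnerSelf_apply, sub_apply, inner_sub_left, map_sub] at h1
  linarith

lemma re_inner_algebraMap_smul (c₁ c₂ : ℝ) (P : H →L[ℂ] H) (x : H) (hx : ‖x‖ = 1) :
    re (inner ℂ ((algebraMap ℝ (H →L[ℂ] H) c₁ + c₂ • P) x) x : ℂ)
      = c₁ + c₂ * re (inner ℂ (P x) x : ℂ) := by
  have h1 : (algebraMap ℝ (H →L[ℂ] H) c₁ + c₂ • P) x = c₁ • x + c₂ • P x := by
    simp [Algebra.algebraMap_eq_smul_one]
  rw [h1, inner_add_left, RCLike.real_smul_eq_coe_smul (K := ℂ) c₁,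
    RCLike.real_smul_eq_coe_smul (K := ℂ) c₂, inner_smul_left, inner_smul_left,
    RCLike.conj_ofReal, RCLike.conj_ofReal, map_add, RCLike.re_ofReal_mul,
    RCLike.re_ofReal_mul, inner_self_eq_norm_sq, hx]
  norm_num

lemma mccarthy {p : ℝ} (hp : 1 ≤ p) {P : H →L[ℂ] H} (hP : 0 ≤ P)
    (hPsa : IsSelfAdjoint P) (x : H) (hx : ‖x‖ = 1) :
    (re (inner ℂ (P x) x : ℂ)) ^ p ≤ re (inner ℂ (cfc (fun t : ℝ => t ^ p) P x) x : ℂ) := by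
  have hp0 : (0:ℝ) < p := by linarith
  have hcont : Continuous (fun t : ℝ => t ^ p) := Real.continuous_rpow_const hp0.le
  have hspec : ∀ t ∈ spectrum ℝ P, (0:ℝ) ≤ t := fun t ht => spectrum_nonneg_of_nonneg hP ht
  set a : ℝ := re (inner ℂ (P x) x : ℂ) with ha
  have ha0 : 0 ≤ a := by
    have := ((ContinuousLinearMap.nonneg_iff_isPositive P).mp hP).re_inner_nonneg_left x
    exact this
  rcases ha0.eq_or_lt with heq | hlt
  · rw [← heq, Real.zero_rpow hp0.ne']
    have hnn : 0 ≤ cfc (fun t : ℝ => t ^ p) P :=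
      cfc_nonneg (fun t ht => Real.rpow_nonneg (hspec t ht) p)
    have := ((ContinuousLinearMap.nonneg_iff_isPositive _).mp hnn).re_inner_nonneg_left x
    exact this
  · -- tangent line
    set c₁ : ℝ := a ^ p - p * a ^ (p - 1) * a with hc₁
    set c₂ : ℝ := p * a ^ (p - 1) with hc₂
    have hmono : cfc (fun t : ℝ => c₁ + c₂ * t) P ≤ cfc (fun t : ℝ => t ^ p) P := by
      apply cfc_mono
      · intro t ht
        have := tangent_line_rpow hp hlt (hspec t ht)
        rw [hc₁, hc₂]; ring_nf; ring_nf at this; linarith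
      · exact (continuous_const.add (continuous_const.mul continuous_id)).continuousOn
      · exact hcont.continuousOn
    have heval : cfc (fun t : ℝ => c₁ + c₂ * t) P
        = algebraMap ℝ (H →L[ℂ] H) c₁ + c₂ • P := by
      rw [cfc_add P (fun _ => c₁) (fun t => c₂ * t) continuousOn_const
          ((continuous_const.mul continuous_id).continuousOn),
        cfc_const c₁ P hPsa, cfc_const_mul c₂ (fun t : ℝ => t) P
          ((continuous_id).continuousOn),
        cfc_id' ℝ P hPsa]
    have h2 := inner_re_mono hmono x
    rw [heval, re_inner_algebraMap_smul c₁ c₂ P x hx] at h2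
    have h3 : c₁ + c₂ * a = a ^ p := by
      rw [hc₁, hc₂]; ring
    linarith [h3 ▸ h2]

end opHelpers

lemma rpow_two_mul {x : ℝ} (hx : 0 ≤ x) (r : ℝ) : x ^ (2 * r) = (x ^ 2) ^ r := by
  rw [Real.rpow_mul hx, Real.rpow_two]

section keyLemmas
variable {H : Type*} [NormedAddCommGroup H] [InnerProductSpace ℂ H] [CompleteSpace H]

lemma isPositive_adjoint_comp (A : H →L[ℂ] H) : 0 ≤ (adjoint A).comp A := by
  rw [ContinuousLinearMap.nonneg_iff_isPositive]
  have := (isPositive_one (E := H) (𝕜 := ℂ)).conj_adjoint (adjoint A)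
  simpa [adjoint_adjoint, ContinuousLinearMap.one_def] using this

lemma isSelfAdjoint_adjoint_comp (A : H →L[ℂ] H) : IsSelfAdjoint ((adjoint A).comp A) :=
  ((ContinuousLinearMap.nonneg_iff_isPositive _).mp (isPositive_adjoint_comp A)).isSelfAdjoint

lemma cfc_absOp_eq {r : ℝ} (hr : 1 ≤ r) (A : H →L[ℂ] H) :
    cfc (fun t : ℝ => t ^ (2 * r)) (absOp A)
      = cfc (fun t : ℝ => t ^ r) ((adjoint A).comp A) := by
  have hsa := isSelfAdjoint_adjoint_comp A
  have hpos := isPositive_adjoint_comp A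
  have hspec : ∀ t ∈ spectrum ℝ ((adjoint A).comp A), (0:ℝ) ≤ t :=
    fun t ht => spectrum_nonneg_of_nonneg hpos ht
  have h2r : (0:ℝ) ≤ 2 * r := by linarith
  rw [show absOp A = cfc Real.sqrt ((adjoint A).comp A) from rfl,
    ← cfc_comp' (fun t : ℝ => t ^ (2*r)) Real.sqrt ((adjoint A).comp A)
      ((Real.continuous_rpow_const h2r).continuousOn) Real.continuous_sqrt.continuousOn hsa]
  apply cfc_congr
  intro t ht
  have ht0 := hspec t ht
  show Real.sqrt t ^ (2 * r) = t ^ r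
  rw [rpow_two_mul (Real.sqrt_nonneg t), Real.sq_sqrt ht0]

lemma re_inner_adjoint_comp (A : H →L[ℂ] H) (x : H) :
    re (inner ℂ (((adjoint A).comp A) x) x : ℂ) = ‖A x‖ ^ 2 := by
  rw [ContinuousLinearMap.comp_apply, adjoint_inner_left, inner_self_eq_norm_sq]

/-- Key lemma: `‖A x‖ ^ (2 r) ≤ re ⟪|A|^{2r} x, x⟫` for unit `x`. -/
lemma key_ineq {r : ℝ} (hr : 1 ≤ r) (A : H →L[ℂ] H) {x : H} (hx : ‖x‖ = 1) :
    ‖A x‖ ^ (2 * r) ≤ re (inner ℂ (cfc (fun t : ℝ => t ^ (2 * r)) (absOp A) x) x : ℂ) := by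
  rw [cfc_absOp_eq hr A, rpow_two_mul (norm_nonneg _), ← re_inner_adjoint_comp A x]
  exact mccarthy hr (isPositive_adjoint_comp A) (isSelfAdjoint_adjoint_comp A) x hx

lemma re_inner_smul_sq (K : H →L[ℂ] H) (c : ℝ) (u : H) :
    re (inner ℂ (K ((c:ℂ) • u)) ((c:ℂ) • u) : ℂ) = c ^ 2 * re (inner ℂ (K u) u : ℂ) := by
  rw [inner_smul_smul, ← Complex.ofReal_pow]
  exact RCLike.re_ofReal_mul _ _

/-- combined convexity + McCarthy step. -/
lemma step4 {r : ℝ} (hr : 1 ≤ r) (A₁ A₂ : H →L[ℂ] H) (x y : H)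
    (hxy : ‖x‖ ^ 2 + ‖y‖ ^ 2 = 1) :
    (‖A₁ x‖ ^ 2 + ‖A₂ y‖ ^ 2) ^ r
      ≤ re (inner ℂ (cfc (fun t : ℝ => t ^ (2 * r)) (absOp A₁) x) x : ℂ)
        + re (inner ℂ (cfc (fun t : ℝ => t ^ (2 * r)) (absOp A₂) y) y : ℂ) := by
  set K₁ := cfc (fun t : ℝ => t ^ (2 * r)) (absOp A₁) with hK₁
  set K₂ := cfc (fun t : ℝ => t ^ (2 * r)) (absOp A₂) with hK₂
  rcases eq_or_ne x 0 with rfl | hx0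
  · have hy : ‖y‖ = 1 := by
      have h1 : ‖y‖ ^ 2 = 1 := by simpa using hxy
      nlinarith [norm_nonneg y]
    have h2 := key_ineq hr A₂ (x := y) hy
    rw [rpow_two_mul (norm_nonneg _)] at h2
    simpa using h2
  rcases eq_or_ne y 0 with rfl | hy0
  · have hx : ‖x‖ = 1 := by
      have h1 : ‖x‖ ^ 2 = 1 := by simpa using hxy
      nlinarith [norm_nonneg x]
    have h2 := key_ineq hr A₁ (x := x) hx
    rw [rpow_two_mul (norm_nonneg _)] at h2
    simpa using h2
  · have hnx : ‖x‖ ≠ 0 := norm_ne_zero_iff.2 hx0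
    have hny : ‖y‖ ≠ 0 := norm_ne_zero_iff.2 hy0
    set u : H := ((‖x‖ : ℂ))⁻¹ • x with hu
    set v : H := ((‖y‖ : ℂ))⁻¹ • y with hvdef
    have hu1 : ‖u‖ = 1 := norm_smul_inv_norm hx0
    have hv1 : ‖v‖ = 1 := norm_smul_inv_norm hy0
    have hxu : x = ((‖x‖ : ℂ)) • u := by
      rw [hu, smul_smul, mul_inv_cancel₀ (by exact_mod_cast hnx), one_smul]
    have hyv : y = ((‖y‖ : ℂ)) • v := by
      rw [hvdef, smul_smul, mul_inv_cancel₀ (by exact_mod_cast hny), one_smul]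
    have hAx : ‖A₁ x‖ ^ 2 = ‖x‖ ^ 2 * ‖A₁ u‖ ^ 2 := by
      conv_lhs => rw [hxu]
      rw [map_smul, norm_smul]
      simp [mul_pow]
    have hAy : ‖A₂ y‖ ^ 2 = ‖y‖ ^ 2 * ‖A₂ v‖ ^ 2 := by
      conv_lhs => rw [hyv]
      rw [map_smul, norm_smul]
      simp [mul_pow]
    have hconv : (‖x‖ ^ 2 * ‖A₁ u‖ ^ 2 + ‖y‖ ^ 2 * ‖A₂ v‖ ^ 2) ^ r
        ≤ ‖x‖ ^ 2 * (‖A₁ u‖ ^ 2) ^ r + ‖y‖ ^ 2 * (‖A₂ v‖ ^ 2) ^ r :=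
      convex_comb_rpow hr (by positivity) (by positivity) hxy (by positivity) (by positivity)
    have hk1 : (‖A₁ u‖ ^ 2) ^ r ≤ re (inner ℂ (K₁ u) u : ℂ) := by
      rw [← rpow_two_mul (norm_nonneg _)]
      exact key_ineq hr A₁ hu1
    have hk2 : (‖A₂ v‖ ^ 2) ^ r ≤ re (inner ℂ (K₂ v) v : ℂ) := by
      rw [← rpow_two_mul (norm_nonneg _)]
      exact key_ineq hr A₂ hv1
    have hs1 : ‖x‖ ^ 2 * re (inner ℂ (K₁ u) u : ℂ) = re (inner ℂ (K₁ x) x : ℂ) := by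
      conv_rhs => rw [hxu]
      rw [re_inner_smul_sq]
    have hs2 : ‖y‖ ^ 2 * re (inner ℂ (K₂ v) v : ℂ) = re (inner ℂ (K₂ y) y : ℂ) := by
      conv_rhs => rw [hyv]
      rw [re_inner_smul_sq]
    calc (‖A₁ x‖ ^ 2 + ‖A₂ y‖ ^ 2) ^ r
        = (‖x‖ ^ 2 * ‖A₁ u‖ ^ 2 + ‖y‖ ^ 2 * ‖A₂ v‖ ^ 2) ^ r := by rw [hAx, hAy]
      _ ≤ ‖x‖ ^ 2 * (‖A₁ u‖ ^ 2) ^ r + ‖y‖ ^ 2 * (‖A₂ v‖ ^ 2) ^ r := hconv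
      _ ≤ ‖x‖ ^ 2 * re (inner ℂ (K₁ u) u : ℂ) + ‖y‖ ^ 2 * re (inner ℂ (K₂ v) v : ℂ) := by
          gcongr <;> positivity
      _ = re (inner ℂ (K₁ x) x : ℂ) + re (inner ℂ (K₂ y) y : ℂ) := by rw [hs1, hs2]

end keyLemmas

section stepB
variable {H : Type*} [NormedAddCommGroup H] [InnerProductSpace ℂ H] [CompleteSpace H]

lemma re_inner_le_norm_op (S : H →L[ℂ] H) {x : H} (hx : ‖x‖ = 1) :
    re (inner ℂ (S x) x : ℂ) ≤ ‖S‖ := by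
  calc re (inner ℂ (S x) x : ℂ) ≤ ‖(inner ℂ (S x) x : ℂ)‖ := RCLike.re_le_norm _
    _ ≤ ‖S x‖ * ‖x‖ := norm_inner_le_norm _ _
    _ ≤ ‖S‖ * ‖x‖ * ‖x‖ := by gcongr; exact S.le_opNorm x
    _ = ‖S‖ := by rw [hx]; ring

lemma stepB {r : ℝ} (hr : 1 ≤ r) (B C : H →L[ℂ] H) :
    numRad (B * C) ^ r ≤ ‖cfc (fun t : ℝ => t ^ (2 * r)) (absOp C)
      + cfc (fun t : ℝ => t ^ (2 * r)) (absOp (adjoint B))‖ / 2 := by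
  have hr0 : (0:ℝ) < r := by linarith
  set K₁ := cfc (fun t : ℝ => t ^ (2 * r)) (absOp C) with hK₁
  set K₂ := cfc (fun t : ℝ => t ^ (2 * r)) (absOp (adjoint B)) with hK₂
  set d : ℝ := ‖K₁ + K₂‖ with hd
  have hd0 : 0 ≤ d := norm_nonneg _
  have hkey : ∀ x : H, ‖x‖ = 1 → ‖(inner ℂ ((B * C) x) x : ℂ)‖ ^ r ≤ d / 2 := by
    intro x hx
    have e1 : (inner ℂ ((B * C) x) x : ℂ) = inner ℂ (C x) (adjoint B x) := by
      rw [ContinuousLinearMap.mul_apply, ← adjoint_inner_right]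
    have e2 : ‖(inner ℂ ((B * C) x) x : ℂ)‖ ≤ ‖C x‖ * ‖adjoint B x‖ := by
      rw [e1]; exact norm_inner_le_norm _ _
    have e4 : ‖(inner ℂ ((B * C) x) x : ℂ)‖ ^ r
        ≤ ((1/2) * ‖C x‖^2 + (1/2) * ‖adjoint B x‖^2) ^ r := by
      apply Real.rpow_le_rpow (norm_nonneg _) _ hr0.le
      calc ‖(inner ℂ ((B * C) x) x : ℂ)‖ ≤ ‖C x‖ * ‖adjoint B x‖ := e2
        _ ≤ (1/2) * ‖C x‖^2 + (1/2) * ‖adjoint B x‖^2 := by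
            nlinarith [sq_nonneg (‖C x‖ - ‖adjoint B x‖)]
    have e5 : ((1/2) * ‖C x‖^2 + (1/2) * ‖adjoint B x‖^2) ^ r
        ≤ (1/2) * (‖C x‖^2)^r + (1/2) * (‖adjoint B x‖^2)^r :=
      convex_comb_rpow hr (by norm_num) (by norm_num) (by norm_num)
        (by positivity) (by positivity)
    have e6 : (‖C x‖^2)^r ≤ re (inner ℂ (K₁ x) x : ℂ) := by
      rw [← rpow_two_mul (norm_nonneg _)]; exact key_ineq hr C hx
    have e7 : (‖adjoint B x‖^2)^r ≤ re (inner ℂ (K₂ x) x : ℂ) := by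
      rw [← rpow_two_mul (norm_nonneg _)]; exact key_ineq hr (adjoint B) hx
    have e8 : re (inner ℂ (K₁ x) x : ℂ) + re (inner ℂ (K₂ x) x : ℂ) ≤ d := by
      have : re (inner ℂ ((K₁ + K₂) x) x : ℂ) ≤ d := re_inner_le_norm_op _ hx
      rwa [ContinuousLinearMap.add_apply, inner_add_left, map_add] at this
    linarith
  have h9 : numRad (B * C) ≤ (d/2) ^ (1/r) := by
    apply numRad_le (Real.rpow_nonneg (by linarith) _)
    intro x hx
    exact le_rpow_inv_of_rpow_le hr0 (norm_nonneg _) (hkey x hx)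
  exact rpow_le_of_le_rpow_inv hr0 (numRad_nonneg _) (by linarith) h9

lemma max_sq_eq {a b : ℝ} (ha : 0 ≤ a) (hb : 0 ≤ b) :
    max (a^2) (b^2) = (max a b)^2 := by
  rcases le_total a b with h | h
  · rw [max_eq_right h, max_eq_right (by nlinarith)]
  · rw [max_eq_left h, max_eq_left (by nlinarith)]

end stepB

section main
variable {H : Type*} [NormedAddCommGroup H] [InnerProductSpace ℂ H] [CompleteSpace H]

lemma re_inner_le_norm_op' (S : H →L[ℂ] H) (x : H) :
    re (inner ℂ (S x) x : ℂ) ≤ ‖S‖ * ‖x‖ ^ 2 := by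
  calc re (inner ℂ (S x) x : ℂ) ≤ ‖(inner ℂ (S x) x : ℂ)‖ := RCLike.re_le_norm _
    _ ≤ ‖S x‖ * ‖x‖ := norm_inner_le_norm _ _
    _ ≤ ‖S‖ * ‖x‖ * ‖x‖ := by gcongr; exact S.le_opNorm x
    _ = ‖S‖ * ‖x‖ ^ 2 := by ring

lemma adjoint_T_apply {B C : H →L[ℂ] H} {T : WithLp 2 (H × H) →L[ℂ] WithLp 2 (H × H)}
    (hT : ∀ x y : H, T ((WithLp.equiv 2 (H × H)).symm (x, y))
      = (WithLp.equiv 2 (H × H)).symm (B y, C x)) (x y : H) :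
    adjoint T ((WithLp.equiv 2 (H × H)).symm (x, y))
      = (WithLp.equiv 2 (H × H)).symm (adjoint C y, adjoint B x) := by
  apply ext_inner_right ℂ
  intro u
  rw [adjoint_inner_left]
  set a : H := (WithLp.equiv 2 (H × H) u).1 with ha
  set b : H := (WithLp.equiv 2 (H × H) u).2 with hb
  have hu : (WithLp.equiv 2 (H × H)).symm (a, b) = u := by
    rw [ha, hb, Prod.mk.eta, Equiv.symm_apply_apply]
  rw [← hu, hT a b]
  simp only [WithLp.prod_inner_apply, WithLp.equiv_symm_apply, WithLp.ofLp_toLp,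
    adjoint_inner_left]
  ring

end main

set_option maxHeartbeats 1000000 in
/-- Theorem `Ramadan1`: `4r`-th power numerical radius bound for the off-diagonal operator
matrix `[[0, B], [C, 0]]`, with `γ₁ = (2β+1)/(β+1)` and `γ₂ = (2β+3)/(β+1)`. -/
theorem offdiag_numRad_pow_four_r {H : Type*}
    [NormedAddCommGroup H] [InnerProductSpace ℂ H] [CompleteSpace H]
    (B C : H →L[ℂ] H) (β : ℝ) (hβ : 0 ≤ β) (r : ℝ) (hr : 1 ≤ r)
    (T : WithLp 2 (H × H) →L[ℂ] WithLp 2 (H × H))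
    (hT : ∀ x y : H,
      T ((WithLp.equiv 2 (H × H)).symm (x, y)) = (WithLp.equiv 2 (H × H)).symm (B y, C x)) :
    numRad T ^ (4 * r) ≤
      (2 * β + 1) / (β + 1) / 16
          * max (‖cfc (fun t : ℝ => t ^ (2 * r)) (absOp C)
                  + cfc (fun t : ℝ => t ^ (2 * r)) (absOp (adjoint B))‖ ^ 2)
                (‖cfc (fun t : ℝ => t ^ (2 * r)) (absOp B)
                  + cfc (fun t : ℝ => t ^ (2 * r)) (absOp (adjoint C))‖ ^ 2)
        + (2 * β + 3) / (β + 1) / 8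
          * max (‖cfc (fun t : ℝ => t ^ (2 * r)) (absOp C)
                  + cfc (fun t : ℝ => t ^ (2 * r)) (absOp (adjoint B))‖)
                (‖cfc (fun t : ℝ => t ^ (2 * r)) (absOp B)
                  + cfc (fun t : ℝ => t ^ (2 * r)) (absOp (adjoint C))‖)
          * max (numRad (B * C) ^ r) (numRad (C * B) ^ r) := by
  have hr0 : (0:ℝ) < r := by linarith
  have h2r0 : (0:ℝ) < 2 * r := by linarith
  set K₁ := cfc (fun t : ℝ => t ^ (2 * r)) (absOp C) with hK₁
  set K₂ := cfc (fun t : ℝ => t ^ (2 * r)) (absOp (adjoint B)) with hK₂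
  set K₃ := cfc (fun t : ℝ => t ^ (2 * r)) (absOp B) with hK₃
  set K₄ := cfc (fun t : ℝ => t ^ (2 * r)) (absOp (adjoint C)) with hK₄
  set d₁ : ℝ := ‖K₁ + K₂‖ with hd₁
  set d₂ : ℝ := ‖K₃ + K₄‖ with hd₂
  set D : ℝ := max d₁ d₂ with hD
  set m : ℝ := max (numRad (B * C) ^ r) (numRad (C * B) ^ r) with hm
  have hd₁0 : 0 ≤ d₁ := norm_nonneg _
  have hd₂0 : 0 ≤ d₂ := norm_nonneg _
  have hD0 : 0 ≤ D := le_max_of_le_left hd₁0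
  have hm0 : 0 ≤ m :=
    le_max_of_le_left (Real.rpow_nonneg (numRad_nonneg _) _)
  have hmD : m ≤ D / 2 := by
    apply max_le
    · calc numRad (B * C) ^ r ≤ d₁ / 2 := stepB hr B C
        _ ≤ D / 2 := by have := le_max_left d₁ d₂; linarith
    · calc numRad (C * B) ^ r ≤ d₂ / 2 := stepB hr C B
        _ ≤ D / 2 := by have := le_max_right d₁ d₂; linarith
  -- Step A : numRad T ^ (2r) ≤ D/4 + m/2
  have hA : ∀ z : WithLp 2 (H × H), ‖z‖ = 1 →
      ‖(inner ℂ (T z) z : ℂ)‖ ^ (2 * r) ≤ D / 4 + m / 2 := by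
    intro z hz
    set x : H := (WithLp.equiv 2 (H × H) z).1 with hx
    set y : H := (WithLp.equiv 2 (H × H) z).2 with hy
    have hzeq : (WithLp.equiv 2 (H × H)).symm (x, y) = z := by
      rw [hx, hy, Prod.mk.eta, Equiv.symm_apply_apply]
    have hn : ‖x‖ ^ 2 + ‖y‖ ^ 2 = 1 := by
      have h1 := WithLp.prod_norm_sq_eq_of_L2 ((WithLp.equiv 2 (H × H)).symm (x, y))
      change _ = ‖x‖ ^ 2 + ‖y‖ ^ 2 at h1
      rw [hzeq, hz] at h1
      nlinarith
    have hTz : T z = (WithLp.equiv 2 (H × H)).symm (B y, C x) := by rw [← hzeq, hT]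
    have hT2z : T (T z) = (WithLp.equiv 2 (H × H)).symm (B (C x), C (B y)) := by
      rw [hTz, hT]
    have hTadj : adjoint T z = (WithLp.equiv 2 (H × H)).symm (adjoint C y, adjoint B x) := by
      rw [← hzeq, adjoint_T_apply hT]
    have hnTz : ‖T z‖ ^ 2 = ‖C x‖ ^ 2 + ‖B y‖ ^ 2 := by
      rw [hTz]
      have h1 := WithLp.prod_norm_sq_eq_of_L2 ((WithLp.equiv 2 (H × H)).symm (B y, C x))
      change _ = ‖B y‖ ^ 2 + ‖C x‖ ^ 2 at h1
      linarith
    have hnTadj : ‖adjoint T z‖ ^ 2 = ‖adjoint B x‖ ^ 2 + ‖adjoint C y‖ ^ 2 := by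
      rw [hTadj]
      have h1 := WithLp.prod_norm_sq_eq_of_L2
        ((WithLp.equiv 2 (H × H)).symm (adjoint C y, adjoint B x))
      change _ = ‖adjoint C y‖ ^ 2 + ‖adjoint B x‖ ^ 2 at h1
      linarith
    have hinner2 : (inner ℂ (T (T z)) z : ℂ) = inner ℂ (B (C x)) x + inner ℂ (C (B y)) y := by
      rw [hT2z, ← hzeq]
      simp only [WithLp.prod_inner_apply, WithLp.equiv_symm_apply, WithLp.ofLp_toLp]
    -- Buzano
    have hb := buzano (a := T z) (b := adjoint T z) hz
    have h1 : (inner ℂ z (adjoint T z) : ℂ) = inner ℂ (T z) z := adjoint_inner_right T z z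
    have h2 : (inner ℂ (T z) (adjoint T z) : ℂ) = inner ℂ (T (T z)) z := adjoint_inner_right T (T z) z
    rw [h1, h2] at hb
    set Φ : ℝ := ‖(inner ℂ (T z) z : ℂ)‖ with hΦ
    set N : ℝ := ‖T z‖ * ‖adjoint T z‖ with hN
    set V : ℝ := ‖(inner ℂ (T (T z)) z : ℂ)‖ with hV
    have hΦ0 : 0 ≤ Φ := norm_nonneg _
    have hN0 : 0 ≤ N := mul_nonneg (norm_nonneg _) (norm_nonneg _)
    have hV0 : 0 ≤ V := norm_nonneg _
    have hstep1 : Φ ^ (2 * r) ≤ ((1/2) * N + (1/2) * V) ^ r := by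
      rw [rpow_two_mul hΦ0]
      apply Real.rpow_le_rpow (by positivity) _ hr0.le
      have hΦ2 : Φ^2 = Φ*Φ := sq Φ
      linarith
    have hstep2 : ((1/2) * N + (1/2) * V) ^ r ≤ (1/2) * N ^ r + (1/2) * V ^ r :=
      convex_comb_rpow hr (by norm_num) (by norm_num) (by norm_num) hN0 hV0
    -- bound N^r
    have hstep3 : N ^ r ≤ (1/2) * (‖T z‖ ^ 2) ^ r + (1/2) * (‖adjoint T z‖ ^ 2) ^ r := by
      calc N ^ r ≤ ((1/2) * ‖T z‖ ^ 2 + (1/2) * ‖adjoint T z‖ ^ 2) ^ r := by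
            apply Real.rpow_le_rpow hN0 _ hr0.le
            rw [hN]
            nlinarith [sq_nonneg (‖T z‖ - ‖adjoint T z‖)]
        _ ≤ _ := convex_comb_rpow hr (by norm_num) (by norm_num) (by norm_num)
            (by positivity) (by positivity)
    have hs1 : (‖T z‖ ^ 2) ^ r ≤ re (inner ℂ (K₁ x) x : ℂ) + re (inner ℂ (K₃ y) y : ℂ) := by
      rw [hnTz]
      exact step4 hr C B x y hn
    have hs2 : (‖adjoint T z‖ ^ 2) ^ r
        ≤ re (inner ℂ (K₂ x) x : ℂ) + re (inner ℂ (K₄ y) y : ℂ) := by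
      rw [hnTadj]
      exact step4 hr (adjoint B) (adjoint C) x y hn
    have hop1 : re (inner ℂ (K₁ x) x : ℂ) + re (inner ℂ (K₂ x) x : ℂ) ≤ d₁ * ‖x‖ ^ 2 := by
      have h3 := re_inner_le_norm_op' (K₁ + K₂) x
      rwa [ContinuousLinearMap.add_apply, inner_add_left, map_add] at h3
    have hop2 : re (inner ℂ (K₃ y) y : ℂ) + re (inner ℂ (K₄ y) y : ℂ) ≤ d₂ * ‖y‖ ^ 2 := by
      have h3 := re_inner_le_norm_op' (K₃ + K₄) y
      rwa [ContinuousLinearMap.add_apply, inner_add_left, map_add] at h3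
    have hNr : N ^ r ≤ D / 2 := by
      have hd1D : d₁ * ‖x‖ ^ 2 ≤ D * ‖x‖ ^ 2 := by
        have := le_max_left d₁ d₂; nlinarith [sq_nonneg ‖x‖]
      have hd2D : d₂ * ‖y‖ ^ 2 ≤ D * ‖y‖ ^ 2 := by
        have := le_max_right d₁ d₂; nlinarith [sq_nonneg ‖y‖]
      have hDxy : D * ‖x‖ ^ 2 + D * ‖y‖ ^ 2 = D := by
        rw [← mul_add, hn, mul_one]
      linarith
    -- bound V^r
    have hVle : V ≤ ‖x‖ ^ 2 * numRad (B * C) + ‖y‖ ^ 2 * numRad (C * B) := by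
      rw [hV, hinner2]
      calc ‖(inner ℂ (B (C x)) x : ℂ) + (inner ℂ (C (B y)) y : ℂ)‖
          ≤ ‖(inner ℂ (B (C x)) x : ℂ)‖ + ‖(inner ℂ (C (B y)) y : ℂ)‖ := norm_add_le _ _
        _ ≤ numRad (B * C) * ‖x‖ ^ 2 + numRad (C * B) * ‖y‖ ^ 2 := by
            have h4 := norm_inner_le_numRad (B * C) x
            have h5 := norm_inner_le_numRad (C * B) y
            rw [ContinuousLinearMap.mul_apply] at h4 h5
            exact add_le_add h4 h5
        _ = ‖x‖ ^ 2 * numRad (B * C) + ‖y‖ ^ 2 * numRad (C * B) := by ring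
    have hVr : V ^ r ≤ m := by
      calc V ^ r ≤ (‖x‖ ^ 2 * numRad (B * C) + ‖y‖ ^ 2 * numRad (C * B)) ^ r :=
            Real.rpow_le_rpow hV0 hVle hr0.le
        _ ≤ ‖x‖ ^ 2 * numRad (B * C) ^ r + ‖y‖ ^ 2 * numRad (C * B) ^ r :=
            convex_comb_rpow hr (by positivity) (by positivity) hn
              (numRad_nonneg _) (numRad_nonneg _)
        _ ≤ ‖x‖ ^ 2 * m + ‖y‖ ^ 2 * m := by
            gcongr
            · exact le_max_left _ _
            · exact le_max_right _ _
        _ = m := by rw [← add_mul, hn, one_mul]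
    linarith
  have hw : numRad T ≤ (D / 4 + m / 2) ^ (1 / (2 * r)) := by
    apply numRad_le (Real.rpow_nonneg (by linarith) _)
    intro z hz
    exact le_rpow_inv_of_rpow_le h2r0 (norm_nonneg _) (hA z hz)
  have hW2 : numRad T ^ (2 * r) ≤ D / 4 + m / 2 :=
    rpow_le_of_le_rpow_inv h2r0 (numRad_nonneg _) (by linarith) hw
  set W : ℝ := numRad T ^ (2 * r) with hWdef
  have hW0 : 0 ≤ W := Real.rpow_nonneg (numRad_nonneg _) _
  have hpow : numRad T ^ (4 * r) = W ^ 2 := by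
    rw [hWdef, show (4:ℝ) * r = (2 * r) * 2 by ring, Real.rpow_mul (numRad_nonneg T),
      Real.rpow_two]
  have hmax : max (d₁ ^ 2) (d₂ ^ 2) = D ^ 2 := max_sq_eq hd₁0 hd₂0
  rw [hpow, hmax]
  have hb1 : (0:ℝ) < β + 1 := by linarith
  have hDm : (0:ℝ) ≤ D - 2 * m := by linarith
  have heq : (2 * β + 1) / (β + 1) / 16 * D ^ 2 + (2 * β + 3) / (β + 1) / 8 * D * m
      = ((2 * β + 1) * D ^ 2 + (2 * β + 3) * (2 * (D * m))) / (16 * (β + 1)) := by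
    field_simp
    ring
  rw [heq, le_div_iff₀ (by positivity)]
  nlinarith [mul_le_mul hW2 hW2 hW0 (by linarith : (0:ℝ) ≤ D / 4 + m / 2),
    mul_nonneg (mul_nonneg hβ hD0) hDm, mul_nonneg hm0 hDm,
    mul_nonneg hβ (mul_nonneg hm0 hDm)]
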